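/- Let M be a binary random variable, Y a finite-valued random variable, and R a {0,1}-valued random variable with R independent of Y given M and P(R=1|M=m) > 0 for m ∈ {0,1}. If M and Y are not independent, then the matrix with rows (P(M=m, Y=y, R=1))_{y ∈ 𝓨} for m ∈ {0,1} has rank 2. -/

import Mathlib

open Finset
open scoped Classical

/-- The probability of the event `A` under the probability mass function `p`. -/
noncomputable def pr {Ω : Type*} [Fintype Ω] (p : Ω → ℝ) (A : Ω → Prop) : ℝ :=
  ∑ ω, if A ω then p ω else 0

lemma pr_split {Ω : Type*} [Fintype Ω] (p : Ω → ℝ) (A : Ω → Prop) (M : Ω → Bool) :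
    pr p A = pr p (fun ω => M ω = true ∧ A ω) + pr p (fun ω => M ω = false ∧ A ω) := by
  unfold pr
  rw [← Finset.sum_add_distrib]
  refine Finset.sum_congr rfl fun ω _ => ?_
  cases h : M ω <;> by_cases hA : A ω <;> simp [h, hA]

lemma pr_fiber {Ω 𝓨 : Type*} [Fintype Ω] [Fintype 𝓨] (p : Ω → ℝ) (A : Ω → Prop) (Y : Ω → 𝓨) :
    ∑ y, pr p (fun ω => A ω ∧ Y ω = y) = pr p A := by
  unfold pr
  rw [Finset.sum_comm]
  refine Finset.sum_congr rfl fun ω _ => ?_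
  by_cases h : A ω <;> simp [h]

/-- For binary `M`, finite-valued `Y`, and a missingness indicator `R` with
`R ⊥ Y | M` and `P(R=1 | M=m) > 0`: if `M` and `Y` are not independent, then the
matrix with rows `(P(M=m, Y=y, R=1))_{y}` for `m ∈ {0,1}` has rank 2, i.e. its
two rows are linearly independent. -/
theorem binary_mediator_rank_two
    {Ω 𝓨 : Type*} [Fintype Ω] [Fintype 𝓨]
    (p : Ω → ℝ) (hp0 : ∀ ω, 0 ≤ p ω) (hp1 : ∑ ω, p ω = 1)
    (M : Ω → Bool) (Y : Ω → 𝓨) (R : Ω → Bool)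
    -- conditional independence  R ⊥ Y | M
    (hCI : ∀ m y r,
      pr p (fun ω => M ω = m) * pr p (fun ω => M ω = m ∧ Y ω = y ∧ R ω = r) =
        pr p (fun ω => M ω = m ∧ Y ω = y) * pr p (fun ω => M ω = m ∧ R ω = r))
    -- positivity of the marginal of M and of P(R=1, M=m)
    (hMpos : ∀ m, 0 < pr p (fun ω => M ω = m))
    (hRpos : ∀ m, 0 < pr p (fun ω => M ω = m ∧ R ω = true))
    -- M and Y are not independent
    (hdep : ∃ m y, pr p (fun ω => M ω = m ∧ Y ω = y) ≠
        pr p (fun ω => M ω = m) * pr p (fun ω => Y ω = y)) :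
    ∀ a b : ℝ,
      (∀ y, a * pr p (fun ω => M ω = true ∧ Y ω = y ∧ R ω = true) +
          b * pr p (fun ω => M ω = false ∧ Y ω = y ∧ R ω = true) = 0) →
      a = 0 ∧ b = 0 := by
  intro a b hab
  set PT := pr p (fun ω => M ω = true) with hPTdef
  set PF := pr p (fun ω => M ω = false) with hPFdef
  have hPT := hMpos true
  have hPF := hMpos false
  have hRT := hRpos true
  have hRF := hRpos false
  -- PT + PF = 1
  have hsum1 : PT + PF = 1 := by
    have h := pr_split p (fun _ => True) M
    simp only [and_true] at h
    have h1 : pr p (fun _ : Ω => True) = 1 := by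
      unfold pr; simpa using hp1
    rw [h1] at h
    linarith
  -- express triples via conditional independence
  have hmy : ∀ m y, pr p (fun ω => M ω = m ∧ Y ω = y ∧ R ω = true) =
      pr p (fun ω => M ω = m ∧ Y ω = y) *
        (pr p (fun ω => M ω = m ∧ R ω = true) / pr p (fun ω => M ω = m)) := by
    intro m y
    have h := hCI m y true
    field_simp [(hMpos m).ne']
    linarith
  set cT := pr p (fun ω => M ω = true ∧ R ω = true) / PT with hcTdef
  set cF := pr p (fun ω => M ω = false ∧ R ω = true) / PF with hcFdef
  have hcT : 0 < cT := div_pos hRT hPT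
  have hcF : 0 < cF := div_pos hRF hPF
  have hab' : ∀ y, (a * cT) * pr p (fun ω => M ω = true ∧ Y ω = y) +
      (b * cF) * pr p (fun ω => M ω = false ∧ Y ω = y) = 0 := by
    intro y
    have h := hab y
    rw [hmy true y, hmy false y] at h
    ring_nf at h ⊢
    rw [hcTdef, hcFdef, hPTdef, hPFdef]
    linear_combination h
  -- sum over y
  have hsumT : ∑ y, pr p (fun ω => M ω = true ∧ Y ω = y) = PT :=
    pr_fiber p _ Y
  have hsumF : ∑ y, pr p (fun ω => M ω = false ∧ Y ω = y) = PF :=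
    pr_fiber p _ Y
  have hABsum : (a * cT) * PT + (b * cF) * PF = 0 := by
    have h0 : ∑ y : 𝓨, ((a * cT) * pr p (fun ω => M ω = true ∧ Y ω = y) +
        (b * cF) * pr p (fun ω => M ω = false ∧ Y ω = y)) = 0 := by
      simp [hab']
    rw [Finset.sum_add_distrib, ← Finset.mul_sum, ← Finset.mul_sum, hsumT, hsumF] at h0
    exact h0
  by_cases hA : a * cT = 0
  · have ha : a = 0 := by
      rcases mul_eq_zero.mp hA with h | h
      · exact h
      · exact absurd h hcT.ne'
    have hB : b * cF = 0 := by
      rw [hA] at hABsum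
      have := hPF.ne'
      nlinarith
    have hb : b = 0 := by
      rcases mul_eq_zero.mp hB with h | h
      · exact h
      · exact absurd h hcF.ne'
    exact ⟨ha, hb⟩
  · exfalso
    have hrel : ∀ y, PF * pr p (fun ω => M ω = true ∧ Y ω = y) =
        PT * pr p (fun ω => M ω = false ∧ Y ω = y) := by
      intro y
      have h := hab' y
      have h2 : (a * cT) * (PF * pr p (fun ω => M ω = true ∧ Y ω = y)) =
          (a * cT) * (PT * pr p (fun ω => M ω = false ∧ Y ω = y)) := by
        linear_combination PF * h - (pr p fun ω => M ω = false ∧ Y ω = y) * hABsum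
      exact mul_left_cancel₀ hA h2
    obtain ⟨m, y, hmy'⟩ := hdep
    apply hmy'
    have hYy : pr p (fun ω => Y ω = y) =
        pr p (fun ω => M ω = true ∧ Y ω = y) + pr p (fun ω => M ω = false ∧ Y ω = y) :=
      pr_split p _ M
    cases m
    · rw [hYy]
      linear_combination -hrel y - (pr p fun ω => M ω = false ∧ Y ω = y) * hsum1
    · rw [hYy]
      linear_combination hrel y - (pr p fun ω => M ω = true ∧ Y ω = y) * hsum1
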